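/- If a rank value function v is strictly decreasing, then any CRV output matching μ is constrained Pareto-undominated in the following sense: there is no feasible matching μ' with z(μ') ≥ α·z* such that every family weakly prefers μ'(i) to μ(i) and at least one family strictly prefers μ'(i) to μ(i). -/

import Mathlib

/-- A matching is feasible if each location `j` hosts exactly `q j` families. -/
def feasible {F L : Type} [Fintype F] [DecidableEq L] (q : L → ℕ) (μ : F → L) : Prop :=
  ∀ j : L, (Finset.univ.filter (fun i => μ i = j)).card = q j

/-- The government objective: expected number of successfully integrated families. -/
def z {F L : Type} [Fintype F] (π : F → L → ℝ) (μ : F → L) : ℝ :=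
  ∑ i, π i (μ i)

/-- Rank of location `j` in the preference list of family `i` (1-based). -/
def rankOf {F L : Type} [DecidableEq L] (prefs : F → List L) (i : F) (j : L) : ℕ :=
  (prefs i).idxOf j + 1

/-- Rank-value welfare of a matching. -/
def welfare {F L : Type} [Fintype F] [DecidableEq L] (v : ℕ → ℝ) (prefs : F → List L)
    (μ : F → L) : ℝ :=
  ∑ i, v (rankOf prefs i (μ i))

/-- If the rank value function is strictly decreasing, any CRV output is
constrained Pareto-undominated: no feasible matching meeting the `α`-approximation
constraint makes every family weakly better off and some family strictly better off. -/
theorem crv_constrained_pareto_undominated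
    {F L : Type} [Fintype F] [Fintype L] [DecidableEq L]
    (q : L → ℕ) (π : F → L → ℝ) (prefs : F → List L) (α zs : ℝ) (v : ℕ → ℝ)
    (hq : ∑ j, q j = Fintype.card F)
    (hπ : ∀ i j, π i j ∈ Set.Icc (0 : ℝ) 1)
    (hα : α ∈ Set.Icc (0 : ℝ) 1)
    (hzs : IsGreatest {x : ℝ | ∃ μ : F → L, feasible q μ ∧ x = z π μ} zs)
    (hprefs : ∀ i, (prefs i).Nodup ∧ ∀ j : L, j ∈ prefs i)
    (hv : ∀ k : ℕ, 1 ≤ k → k + 1 ≤ Fintype.card L → v (k + 1) < v k)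
    -- μ is a CRV output:
    (μ : F → L) (hFeas : feasible q μ) (hZ : α * zs ≤ z π μ)
    (hOpt : ∀ μ' : F → L, feasible q μ' → α * zs ≤ z π μ' →
      welfare v prefs μ' ≤ welfare v prefs μ) :
    ¬ ∃ μ' : F → L, feasible q μ' ∧ α * zs ≤ z π μ' ∧
        (∀ i : F, rankOf prefs i (μ' i) ≤ rankOf prefs i (μ i)) ∧
        (∃ i : F, rankOf prefs i (μ' i) < rankOf prefs i (μ i)) := by

  rintro ⟨μ', hF', hZ', hWeak, i0, hStrict⟩
  -- rank bounds
  have hlen : ∀ i : F, (prefs i).length = Fintype.card L := by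
    intro i
    obtain ⟨hnd, hall⟩ := hprefs i
    have : (prefs i).toFinset = Finset.univ := by
      ext j; simp [hall j]
    calc (prefs i).length = (prefs i).toFinset.card := (List.toFinset_card_of_nodup hnd).symm
      _ = Fintype.card L := by rw [this]; rfl
  have hrank : ∀ i (j : L), 1 ≤ rankOf prefs i j ∧ rankOf prefs i j ≤ Fintype.card L := by
    intro i j
    constructor
    · simp [rankOf]
    · have hj : j ∈ prefs i := (hprefs i).2 j
      have := List.idxOf_lt_length_iff.mpr hj
      rw [hlen i] at this
      simpa [rankOf] using this
  -- v is antitone on [1, card L]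
  have hmono : ∀ a b : ℕ, 1 ≤ a → b ≤ Fintype.card L → a ≤ b → v b ≤ v a := by
    intro a b ha hb hab
    induction b with
    | zero => omega
    | succ n ih =>
      rcases Nat.eq_or_lt_of_le hab with h | h
      · rw [h]
      · have hn : a ≤ n := by omega
        have h1n : 1 ≤ n := by omega
        have := hv n h1n hb
        have := ih (by omega) hn
        linarith
  have hlt : ∀ a b : ℕ, 1 ≤ a → b ≤ Fintype.card L → a < b → v b < v a := by
    intro a b ha hb hab
    have hb1 : b = (b - 1) + 1 := by omega
    have h1 : v b < v (b-1) := by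
      rw [hb1]; exact hv (b-1) (by omega) (by omega)
    have h2 : v (b-1) ≤ v a := hmono a (b-1) ha (by omega) (by omega)
    linarith
  -- welfare strictly increases
  have hW : welfare v prefs μ < welfare v prefs μ' := by
    unfold welfare
    refine Finset.sum_lt_sum (fun i _ => ?_) ⟨i0, Finset.mem_univ i0,
      hlt _ _ (hrank i0 (μ' i0)).1 (hrank i0 (μ i0)).2 hStrict⟩
    rcases Nat.eq_or_lt_of_le (hWeak i) with h | h
    · rw [h]
    · exact le_of_lt (hlt _ _ (hrank i (μ' i)).1 (hrank i (μ i)).2 h)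
  exact absurd (hOpt μ' hF' hZ') (not_le.mpr hW)
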